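/- In a weighted recursive tree with positive weight sequence (w_i), the probability that node i (with 2 ≤ i < n) is an ancestor of node n equals w_i / (w_1 + w_2 + ... + w_i). -/

import Mathlib

open MeasureTheory Finset Filter

/-- Attachment probability in a weighted recursive tree: node `j` attaches to node `i`. -/
noncomputable def wrtStep (w : ℕ → ℝ) (j i : ℕ) : ℝ :=
  if j ≤ 1 then (if i = 0 then 1 else 0)
  else if 1 ≤ i ∧ i < j then w i / (∑ k ∈ Finset.Icc 1 (j - 1), w k) else 0

/-- The law of a weighted recursive tree on `n` nodes, as a measure on parent functions
`ω : ℕ → ℕ`, where `ω j` is the parent of node `j` (and `ω j = 0` for irrelevant `j`). -/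
noncomputable def wrtMeasure (w : ℕ → ℝ) (n : ℕ) : Measure (ℕ → ℕ) :=
  ∑ t : Fin (n + 1) → Fin (n + 1),
    (ENNReal.ofReal (∏ j : Fin (n + 1), wrtStep w j.val (t j).val)) •
      Measure.dirac (fun j => if h : j < n + 1 then (t ⟨j, h⟩).val else 0)

/-- `i` is an ancestor of `m`: some iterate of the parent map sends `m` to `i`. -/
def isAncestor (ω : ℕ → ℕ) (i m : ℕ) : Prop := ∃ l, 0 < l ∧ ω^[l] m = i

/-- The depth of node `m`: its number of ancestors (nodes on the path from the root to `m`). -/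
noncomputable def depth (ω : ℕ → ℕ) (m : ℕ) : ℕ :=
  Set.ncard {i | 1 ≤ i ∧ isAncestor ω i m}

/-- The height of the tree on nodes `1, …, n`: the maximal depth of a node. -/
noncomputable def height (ω : ℕ → ℕ) (n : ℕ) : ℕ :=
  (Finset.Icc 1 n).sup (fun i => depth ω i)

/-- The number of branches: the number of children of the root. -/
def branches (ω : ℕ → ℕ) (n : ℕ) : ℕ :=
  ((Finset.Icc 2 n).filter (fun j => ω j = 1)).card

open scoped Classical in
/-- The number of leaves: nodes with no children among nodes `1, …, n`. -/
noncomputable def numLeaves (ω : ℕ → ℕ) (n : ℕ) : ℕ :=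
  ((Finset.Icc 1 n).filter (fun i => ∀ j ∈ Finset.Icc (i + 1) n, ω j ≠ i)).card
section AncestorProofAux

open scoped Classical

/-- `0/1` indicator of a proposition. -/
noncomputable def chi (A : Prop) : ℝ := if A then 1 else 0

lemma chi_congr {A B : Prop} (h : A ↔ B) : chi A = chi B := by
  unfold chi
  by_cases hA : A
  · rw [if_pos hA, if_pos (h.mp hA)]
  · rw [if_neg hA, if_neg (fun hB => hA (h.mpr hB))]

lemma chi_nonneg (A : Prop) : 0 ≤ chi A := by
  unfold chi; split <;> norm_num

lemma chi_true {A : Prop} (h : A) : chi A = 1 := if_pos h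

lemma chi_false {A : Prop} (h : ¬ A) : chi A = 0 := if_neg h

variable {w : ℕ → ℝ} {n : ℕ}

lemma Spos (hw : ∀ i, 0 < w i) {j : ℕ} (hj : 1 ≤ j) : 0 < ∑ k ∈ Finset.Icc 1 j, w k :=
  Finset.sum_pos (fun k _ => hw k) ⟨1, by simp [hj]⟩

lemma wrtStep_nonneg (hw : ∀ i, 0 < w i) (j v : ℕ) : 0 ≤ wrtStep w j v := by
  unfold wrtStep
  split
  · split <;> norm_num
  · split
    · exact div_nonneg (hw v).le (Finset.sum_nonneg fun k _ => (hw k).le)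
    · exact le_refl 0

lemma sum_wrtStep (hw : ∀ i, 0 < w i) {j : ℕ} (hj : j ≤ n) :
    ∑ v : Fin (n+1), wrtStep w j v.val = 1 := by
  rw [Fin.sum_univ_eq_sum_range (fun k => wrtStep w j k) (n+1)]
  unfold wrtStep
  by_cases h1 : j ≤ 1
  · simp only [if_pos h1]
    rw [Finset.sum_ite_eq' (Finset.range (n+1)) 0 (fun _ => (1:ℝ)),
      if_pos (Finset.mem_range.mpr (by omega))]
  · simp only [if_neg h1]
    rw [← Finset.sum_filter]
    have hf : (Finset.range (n+1)).filter (fun k => 1 ≤ k ∧ k < j) = Finset.Icc 1 (j-1) := by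
      ext k
      simp only [Finset.mem_filter, Finset.mem_range, Finset.mem_Icc]
      omega
    rw [hf, ← Finset.sum_div, div_self (Spos hw (by omega)).ne']

/-- The full weight of a parent configuration. -/
noncomputable def PP (w : ℕ → ℝ) (n : ℕ) (t : Fin (n+1) → Fin (n+1)) : ℝ :=
  ∏ j, wrtStep w j.val (t j).val

/-- The parent function associated to a configuration (the dirac point of `wrtMeasure`). -/
def om (n : ℕ) (t : Fin (n+1) → Fin (n+1)) : ℕ → ℕ :=
  fun j => if h : j < n + 1 then (t ⟨j, h⟩).val else 0

lemma PP_nonneg (hw : ∀ i, 0 < w i) (t : Fin (n+1) → Fin (n+1)) : 0 ≤ PP w n t :=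
  Finset.prod_nonneg fun j _ => wrtStep_nonneg hw _ _

lemma sum_PP (hw : ∀ i, 0 < w i) : ∑ t : Fin (n+1) → Fin (n+1), PP w n t = 1 := by
  have h : (∏ j : Fin (n+1), ∑ v : Fin (n+1), wrtStep w j.val v.val)
      = ∑ t : Fin (n+1) → Fin (n+1), ∏ j, wrtStep w j.val ((t j).val) := by
    rw [Finset.prod_univ_sum, Fintype.piFinset_univ]
  unfold PP
  rw [← h]
  exact Finset.prod_eq_one fun j _ => sum_wrtStep hw (by omega)

/-- Support condition for a configuration. -/
def Supp (n : ℕ) (t : Fin (n+1) → Fin (n+1)) : Prop :=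
  ∀ j : Fin (n+1), ((j : ℕ) ≤ 1 → ((t j : ℕ) = 0)) ∧
    (2 ≤ (j : ℕ) → 1 ≤ (t j : ℕ) ∧ (t j : ℕ) < (j : ℕ))

lemma supp_of_PP_ne (t : Fin (n+1) → Fin (n+1)) (h : PP w n t ≠ 0) : Supp n t := by
  intro j
  by_contra hc
  apply h
  unfold PP
  apply Finset.prod_eq_zero (Finset.mem_univ j)
  unfold wrtStep
  by_cases hj : (j : ℕ) ≤ 1
  · have htj : ¬ ((t j : ℕ) = 0) := fun h0 => hc ⟨fun _ => h0, fun h2 => absurd hj (by omega)⟩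
    rw [if_pos hj, if_neg htj]
  · have hB : ¬ (1 ≤ (t j : ℕ) ∧ (t j : ℕ) < (j : ℕ)) :=
      fun hB => hc ⟨fun h' => absurd h' hj, fun _ => hB⟩
    rw [if_neg hj, if_neg hB]

lemma om_cases {t : Fin (n+1) → Fin (n+1)} (hs : Supp n t) (j : ℕ) :
    om n t j = 0 ∨ (om n t j < j ∧ 1 ≤ om n t j) := by
  unfold om
  split
  · rename_i h
    rcases le_or_gt j 1 with h1 | h1
    · exact Or.inl ((hs ⟨j, h⟩).1 h1)
    · have h2 := (hs ⟨j, h⟩).2 h1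
      exact Or.inr ⟨h2.2, h2.1⟩
  · exact Or.inl rfl

lemma om_iterate_le {t : Fin (n+1) → Fin (n+1)} (hs : Supp n t) (l j : ℕ) :
    (om n t)^[l] j ≤ j := by
  induction l with
  | zero => simp
  | succ l ih =>
    rw [Function.iterate_succ_apply']
    rcases om_cases hs ((om n t)^[l] j) with h | h <;> omega

lemma om_anc_lt {t : Fin (n+1) → Fin (n+1)} (hs : Supp n t) :
    ∀ l, 0 < l → ∀ j i0 : ℕ, 1 ≤ i0 → (om n t)^[l] j = i0 → i0 < j := by
  intro l
  induction l with
  | zero => omega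
  | succ l ih =>
    intro _ j i0 hi0 hit
    rw [Function.iterate_succ_apply] at hit
    rcases Nat.eq_zero_or_pos l with hl | hl
    · subst hl
      simp only [Function.iterate_zero, id_eq] at hit
      rcases om_cases hs j with h | h <;> omega
    · rcases om_cases hs j with h | h
      · have h0 : om n t 0 = 0 := by rcases om_cases hs 0 with h' | h' <;> omega
        rw [h, Function.iterate_fixed h0 l] at hit
        omega
      · have := ih hl (om n t j) i0 hi0 hit
        omega

lemma om_anc_rec {t : Fin (n+1) → Fin (n+1)} (hs : Supp n t) {i0 m : ℕ} (hi0 : 1 ≤ i0) :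
    isAncestor (om n t) i0 m ↔
      (om n t m = i0 ∨ (i0 < om n t m ∧ isAncestor (om n t) i0 (om n t m))) := by
  constructor
  · rintro ⟨l, hl, hit⟩
    cases l with
    | zero => omega
    | succ l =>
      rw [Function.iterate_succ_apply] at hit
      rcases Nat.eq_zero_or_pos l with h0 | h0
      · subst h0
        simp only [Function.iterate_zero, id_eq] at hit
        exact Or.inl hit
      · exact Or.inr ⟨om_anc_lt hs l h0 _ _ hi0 hit, ⟨l, h0, hit⟩⟩
  · rintro (h | ⟨_, l, hl, hit⟩)
    · exact ⟨1, one_pos, by simpa using h⟩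
    · exact ⟨l + 1, by omega, by rw [Function.iterate_succ_apply]; exact hit⟩

lemma om_anc_cut {t : Fin (n+1) → Fin (n+1)} (hs : Supp n t) {m v : ℕ} (hvm : v < m) (i0 : ℕ) :
    isAncestor (om n t) i0 v ↔ isAncestor (Function.update (om n t) m 0) i0 v := by
  have key : ∀ l, (Function.update (om n t) m 0)^[l] v = (om n t)^[l] v := by
    intro l
    induction l with
    | zero => rfl
    | succ l ih =>
      rw [Function.iterate_succ_apply', Function.iterate_succ_apply', ih]
      apply Function.update_of_ne
      have := om_iterate_le hs l v
      omega
  constructor <;> rintro ⟨l, hl, h⟩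
  · exact ⟨l, hl, by rw [key l]; exact h⟩
  · exact ⟨l, hl, by rw [key l] at h; exact h⟩

/-- Integrating out one coordinate of a product sum. -/
lemma split_sum {N : ℕ} (p : Fin N → Fin N → ℝ) (m : Fin N) (hp : ∑ v, p m v = 1)
    (φ : Fin N → ℝ) (ψ : (Fin N → Fin N) → ℝ)
    (hψ : ∀ t u, ψ (Function.update t m u) = ψ t) :
    ∑ t : Fin N → Fin N, (∏ j, p j (t j)) * (φ (t m) * ψ t)
      = (∑ v, p m v * φ v) * ∑ t : Fin N → Fin N, (∏ j, p j (t j)) * ψ t := by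
  have prod_split : ∀ t : Fin N → Fin N,
      (∏ j, p j (t j)) = p m (t m) * ∏ j ∈ Finset.univ.erase m, p j (t j) :=
    fun t => (Finset.mul_prod_erase Finset.univ _ (Finset.mem_univ m)).symm
  have prod_upd : ∀ (t : Fin N → Fin N) (u : Fin N),
      (∏ j ∈ Finset.univ.erase m, p j (Function.update t m u j))
        = ∏ j ∈ Finset.univ.erase m, p j (t j) := by
    intro t u
    exact Finset.prod_congr rfl fun j hj => by
      rw [Function.update_of_ne (Finset.ne_of_mem_erase hj)]
  have key : ∑ x : (Fin N → Fin N) × Fin N,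
        (p m (x.1 m) * φ (x.1 m)) * ((p m x.2 * ∏ j ∈ Finset.univ.erase m, p j (x.1 j)) * ψ x.1)
      = ∑ x : (Fin N → Fin N) × Fin N,
        (p m x.2 * φ x.2) * ((∏ j, p j (x.1 j)) * ψ x.1) := by
    apply Fintype.sum_bijective (fun x : (Fin N → Fin N) × Fin N =>
      (Function.update x.1 m x.2, x.1 m))
    · apply Function.Involutive.bijective
      intro x
      refine Prod.ext ?_ ?_
      · simp only
        rw [Function.update_idem, Function.update_eq_self]
      · simp only
        rw [Function.update_self]
    · intro x
      simp only
      rw [hψ, prod_split (Function.update x.1 m x.2), Function.update_self, prod_upd]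
  have lhs_eq : ∑ x : (Fin N → Fin N) × Fin N,
        (p m (x.1 m) * φ (x.1 m)) * ((p m x.2 * ∏ j ∈ Finset.univ.erase m, p j (x.1 j)) * ψ x.1)
      = ∑ t : Fin N → Fin N, (∏ j, p j (t j)) * (φ (t m) * ψ t) := by
    rw [Fintype.sum_prod_type]
    apply Finset.sum_congr rfl
    intro t _
    have h1 : ∀ u : Fin N,
        (p m (t m) * φ (t m)) * ((p m u * ∏ j ∈ Finset.univ.erase m, p j (t j)) * ψ t)
          = p m u * ((p m (t m) * φ (t m)) * ((∏ j ∈ Finset.univ.erase m, p j (t j)) * ψ t)) := by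
      intro u; ring
    rw [Finset.sum_congr rfl fun u _ => h1 u, ← Finset.sum_mul, hp, one_mul, prod_split t]
    ring
  have rhs_eq : ∑ x : (Fin N → Fin N) × Fin N,
        (p m x.2 * φ x.2) * ((∏ j, p j (x.1 j)) * ψ x.1)
      = (∑ v, p m v * φ v) * ∑ t : Fin N → Fin N, (∏ j, p j (t j)) * ψ t := by
    rw [Fintype.sum_prod_type, Finset.mul_sum]
    apply Finset.sum_congr rfl
    intro t _
    dsimp only
    rw [← Finset.sum_mul]
  rw [← lhs_eq, key, rhs_eq]

end AncestorProofAux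
section AncestorMain
open scoped Classical

lemma main_sum (w : ℕ → ℝ) (hw : ∀ i, 0 < w i) (n i : ℕ) (h2 : 2 ≤ i) (hin : i < n) :
    ∀ m, i < m → m ≤ n →
      ∑ t : Fin (n+1) → Fin (n+1), PP w n t * chi (isAncestor (om n t) i m)
        = w i / ∑ k ∈ Finset.Icc 1 i, w k := by
  intro m
  induction m using Nat.strong_induction_on with
  | _ m IH =>
    intro him hmn
    have hm1 : m < n + 1 := by omega
    set Q : ℝ := w i / ∑ k ∈ Finset.Icc 1 i, w k with hQ
    set m' : Fin (n+1) := ⟨m, hm1⟩ with hm'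
    set g : Fin (n+1) → (Fin (n+1) → Fin (n+1)) → ℝ := fun v t =>
      if (v : ℕ) = i then 1 else if i < (v : ℕ)
        then chi (isAncestor (Function.update (om n t) m 0) i (v : ℕ)) else 0 with hg
    have om_at : ∀ t : Fin (n+1) → Fin (n+1), om n t m = (t m' : ℕ) := by
      intro t
      rw [hm']
      unfold om
      rw [dif_pos hm1]
    -- Step A: pointwise rewriting of the indicator
    have hA : ∀ t : Fin (n+1) → Fin (n+1),
        PP w n t * chi (isAncestor (om n t) i m)
          = ∑ v : Fin (n+1), PP w n t * ((if t m' = v then 1 else 0) * g v t) := by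
      intro t
      rw [← Finset.mul_sum]
      by_cases hP : PP w n t = 0
      · rw [hP, zero_mul, zero_mul]
      congr 1
      have hs := supp_of_PP_ne t hP
      have hsum : ∑ v : Fin (n+1), (if t m' = v then 1 else 0) * g v t = g (t m') t := by
        rw [Finset.sum_eq_single_of_mem (t m') (Finset.mem_univ _)]
        · rw [if_pos rfl, one_mul]
        · intro v _ hv
          rw [if_neg (fun h => hv h.symm), zero_mul]
      rw [hsum]
      have htm : om n t m = (t m' : ℕ) := om_at t
      have hrange : 1 ≤ (t m' : ℕ) ∧ (t m' : ℕ) < m := (hs m').2 (show 2 ≤ m by omega)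
      rcases lt_trichotomy ((t m' : ℕ)) i with hlt | heq | hgt
      · simp only [hg]
        rw [if_neg (by omega), if_neg (by omega)]
        apply chi_false
        intro hanc
        rcases (om_anc_rec hs (show 1 ≤ i by omega)).mp hanc with h | h
        · omega
        · have := h.1; omega
      · simp only [hg]
        rw [if_pos heq]
        exact chi_true ⟨1, one_pos, by rw [Function.iterate_one, htm]; exact heq⟩
      · simp only [hg]
        rw [if_neg (by omega), if_pos hgt]
        apply chi_congr
        have e1 : isAncestor (om n t) i m ↔ isAncestor (om n t) i ((t m' : ℕ)) := by
          rw [om_anc_rec hs (show 1 ≤ i by omega), htm]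
          constructor
          · rintro (h | h)
            · omega
            · exact h.2
          · intro h
            exact Or.inr ⟨hgt, h⟩
        exact e1.trans (om_anc_cut hs hrange.2 i)
    have step1 : ∑ t : Fin (n+1) → Fin (n+1), PP w n t * chi (isAncestor (om n t) i m)
        = ∑ v : Fin (n+1), ∑ t : Fin (n+1) → Fin (n+1),
            PP w n t * ((if t m' = v then 1 else 0) * g v t) :=
      (Finset.sum_congr rfl fun t _ => hA t).trans Finset.sum_comm
    -- Step B: integrate out coordinate m
    have step2 : ∀ v : Fin (n+1),
        ∑ t : Fin (n+1) → Fin (n+1), PP w n t * ((if t m' = v then 1 else 0) * g v t)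
          = wrtStep w m (v : ℕ) * ∑ t : Fin (n+1) → Fin (n+1), PP w n t * g v t := by
      intro v
      have hψ : ∀ (t : Fin (n+1) → Fin (n+1)) (u : Fin (n+1)),
          g v (Function.update t m' u) = g v t := by
        intro t u
        have hcut : Function.update (om n (Function.update t m' u)) m 0
            = Function.update (om n t) m 0 := by
          funext j
          by_cases hj : j = m
          · subst hj
            rw [Function.update_self, Function.update_self]
          · rw [Function.update_of_ne hj, Function.update_of_ne hj]
            unfold om
            split
            · rename_i hlt
              rw [Function.update_of_ne (by rw [hm']; exact Fin.ne_of_val_ne hj)]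
            · rfl
        simp only [hg]
        rw [hcut]
      have h := split_sum (fun j u : Fin (n+1) => wrtStep w (j : ℕ) (u : ℕ)) m'
        (sum_wrtStep hw hmn) (fun u => if u = v then 1 else 0) (g v) hψ
      unfold PP
      rw [h]
      congr 1
      have hstep : ∀ u : Fin (n+1),
          wrtStep w (m' : ℕ) (u : ℕ) * (if u = v then 1 else 0)
            = if u = v then wrtStep w (m' : ℕ) (u : ℕ) else 0 := by
        intro u
        split <;> [rw [mul_one]; rw [mul_zero]]
      rw [Finset.sum_congr rfl fun u _ => hstep u,
        Finset.sum_ite_eq' Finset.univ v (fun u : Fin (n+1) => wrtStep w (m' : ℕ) (u : ℕ)),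
        if_pos (Finset.mem_univ v)]
    -- Step C: evaluate the inner sums
    have hBi : ∀ v : Fin (n+1), (v : ℕ) = i →
        ∑ t : Fin (n+1) → Fin (n+1), PP w n t * g v t = 1 := by
      intro v hv
      have hgv : ∀ t, g v t = 1 := fun t => by simp only [hg]; rw [if_pos hv]
      rw [Finset.sum_congr rfl fun t _ => by rw [hgv t, mul_one]]
      exact sum_PP hw
    have hBgt : ∀ v : Fin (n+1), i < (v : ℕ) → (v : ℕ) < m →
        ∑ t : Fin (n+1) → Fin (n+1), PP w n t * g v t = Q := by
      intro v hvi hvm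
      have hpt : ∀ t : Fin (n+1) → Fin (n+1), PP w n t * g v t
          = PP w n t * chi (isAncestor (om n t) i (v : ℕ)) := by
        intro t
        by_cases hP : PP w n t = 0
        · rw [hP, zero_mul, zero_mul]
        have hs := supp_of_PP_ne t hP
        congr 1
        simp only [hg]
        rw [if_neg (by omega), if_pos hvi]
        exact (chi_congr (om_anc_cut hs hvm i)).symm
      rw [Finset.sum_congr rfl fun t _ => hpt t]
      exact IH (v : ℕ) hvm hvi (by omega)
    have hBlt : ∀ v : Fin (n+1), (v : ℕ) < i →
        ∑ t : Fin (n+1) → Fin (n+1), PP w n t * g v t = 0 := by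
      intro v hv
      have hgv : ∀ t, g v t = 0 := fun t => by
        simp only [hg]; rw [if_neg (by omega), if_neg (by omega)]
      rw [Finset.sum_congr rfl fun t _ => by rw [hgv t, mul_zero]]
      exact Finset.sum_const_zero
    have hterm : ∀ v : Fin (n+1),
        wrtStep w m (v : ℕ) * ∑ t : Fin (n+1) → Fin (n+1), PP w n t * g v t
          = (if (v : ℕ) = i then w i / ∑ k ∈ Finset.Icc 1 (m-1), w k else 0)
            + (if i < (v : ℕ) ∧ (v : ℕ) < m
                then w (v : ℕ) * (Q / ∑ k ∈ Finset.Icc 1 (m-1), w k) else 0) := by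
      intro v
      by_cases hv : (v : ℕ) = i
      · rw [hBi v hv, mul_one, if_pos hv, if_neg (by omega), add_zero]
        unfold wrtStep
        rw [if_neg (show ¬ m ≤ 1 by omega),
          if_pos (show 1 ≤ (v : ℕ) ∧ (v : ℕ) < m by omega), hv]
      · by_cases hv2 : i < (v : ℕ) ∧ (v : ℕ) < m
        · rw [hBgt v hv2.1 hv2.2, if_neg hv, if_pos hv2, zero_add]
          unfold wrtStep
          rw [if_neg (show ¬ m ≤ 1 by omega),
            if_pos (show 1 ≤ (v : ℕ) ∧ (v : ℕ) < m by omega)]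
          ring
        · rw [if_neg hv, if_neg hv2, add_zero]
          rcases lt_or_ge ((v : ℕ)) i with hlt | hge
          · rw [hBlt v hlt, mul_zero]
          · unfold wrtStep
            rw [if_neg (show ¬ m ≤ 1 by omega),
              if_neg (show ¬ (1 ≤ (v : ℕ) ∧ (v : ℕ) < m) by omega), zero_mul]
    -- assemble
    rw [step1, Finset.sum_congr rfl fun v _ => (step2 v).trans (hterm v),
      Finset.sum_add_distrib,
      Fin.sum_univ_eq_sum_range
        (fun k => if k = i then w i / ∑ k ∈ Finset.Icc 1 (m-1), w k else 0) (n+1),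
      Fin.sum_univ_eq_sum_range
        (fun k => if i < k ∧ k < m then w k * (Q / ∑ k ∈ Finset.Icc 1 (m-1), w k) else 0) (n+1),
      Finset.sum_ite_eq' (Finset.range (n+1)) i
        (fun _ => w i / ∑ k ∈ Finset.Icc 1 (m-1), w k),
      if_pos (Finset.mem_range.mpr (by omega)),
      ← Finset.sum_filter]
    have hfil : (Finset.range (n+1)).filter (fun k => i < k ∧ k < m)
        = Finset.Icc (i+1) (m-1) := by
      ext k
      simp only [Finset.mem_filter, Finset.mem_range, Finset.mem_Icc]
      omega
    rw [hfil, ← Finset.sum_mul]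
    have hdec : ∑ k ∈ Finset.Icc 1 (m-1), w k
        = (∑ k ∈ Finset.Icc 1 i, w k) + ∑ k ∈ Finset.Icc (i+1) (m-1), w k := by
      rw [show Finset.Icc 1 (m-1) = Finset.Icc 1 i ∪ Finset.Icc (i+1) (m-1) from by
          ext k
          simp only [Finset.mem_union, Finset.mem_Icc]
          omega,
        Finset.sum_union (by
          rw [Finset.disjoint_left]
          intro k hk1 hk2
          simp only [Finset.mem_Icc] at hk1 hk2
          omega)]
    have hSi : (0:ℝ) < ∑ k ∈ Finset.Icc 1 i, w k := Spos hw (by omega)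
    have hT : (0:ℝ) ≤ ∑ k ∈ Finset.Icc (i+1) (m-1), w k :=
      Finset.sum_nonneg fun k _ => (hw k).le
    rw [hQ, hdec]
    have h1 : (∑ k ∈ Finset.Icc 1 i, w k) ≠ 0 := hSi.ne'
    have h2' : (∑ k ∈ Finset.Icc 1 i, w k) + (∑ k ∈ Finset.Icc (i+1) (m-1), w k) ≠ 0 := by
      positivity
    field_simp

end AncestorMain
/-- In a weighted recursive tree with positive weights, the probability that node `i`
(with `2 ≤ i < n`) is an ancestor of node `n` is `w i / (w 1 + ⋯ + w i)`. -/
theorem ancestor_prob (w : ℕ → ℝ) (hw : ∀ i, 0 < w i) (n i : ℕ) (h2 : 2 ≤ i) (hin : i < n) :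
    wrtMeasure w n {ω | isAncestor ω i n} =
      ENNReal.ofReal (w i / ∑ k ∈ Finset.Icc 1 i, w k) := by
  classical
  have key : wrtMeasure w n {ω | isAncestor ω i n}
      = ENNReal.ofReal (∑ t : Fin (n+1) → Fin (n+1),
          PP w n t * chi (isAncestor (om n t) i n)) := by
    unfold wrtMeasure
    rw [Measure.finset_sum_apply,
      ENNReal.ofReal_sum_of_nonneg
        (fun t _ => mul_nonneg (PP_nonneg hw t) (chi_nonneg _))]
    apply Finset.sum_congr rfl
    intro t _
    rw [Measure.smul_apply, smul_eq_mul, Measure.dirac_apply,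
      show (fun j => if h : j < n + 1 then ((t ⟨j, h⟩ : ℕ)) else 0) = om n t from rfl]
    by_cases hmem : isAncestor (om n t) i n
    · rw [Set.indicator_of_mem (show om n t ∈ {ω | isAncestor ω i n} from hmem)
          (1 : (ℕ → ℕ) → ENNReal), chi_true hmem, mul_one, Pi.one_apply, mul_one]
      rfl
    · rw [Set.indicator_of_notMem (show om n t ∉ {ω | isAncestor ω i n} from hmem)
          (1 : (ℕ → ℕ) → ENNReal), mul_zero, chi_false hmem, mul_zero,
        ENNReal.ofReal_zero]
  rw [key, main_sum w hw n i h2 hin n hin le_rfl]
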